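/- Let r be an even positive integer and let t, y be related by t/y = Z − Z^{−1} and t^r·(Z^{r+1} − Z^{−r−1})/(r+1) = (Z − Z^{−1})^{r+1} for an auxiliary variable Z. Then y satisfies the algebraic equation Σ_{j=0}^{r/2} (1/(2j+1))·binom(j + r/2, 2j)·y^{r−2j}·t^{2j} = 1, and this equation has a unique power series solution y(t) ∈ 1 + t²ℚ[[t²]], beginning y(t) = 1 − ((r+2)/24)t² + ((r+2)(r−6)(2r+1)/5760)t⁴ + O(t⁶). -/

import Mathlib

/-- `isSolD r y` says that `y ∈ 1 + t²ℚ[[t²]]` and `y` solves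
`Σ_{j=0}^{r/2} (1/(2j+1))·binom(j+r/2,2j)·y^{r-2j}·t^{2j} = 1`. -/
def isSolD (r : ℕ) (y : PowerSeries ℚ) : Prop :=
  PowerSeries.coeff (R := ℚ) 0 y = 1 ∧ (∀ n : ℕ, Odd n → PowerSeries.coeff (R := ℚ) n y = 0) ∧
    ∑ j ∈ Finset.range (r / 2 + 1),
        PowerSeries.C (R := ℚ) ((Nat.choose (j + r / 2) (2 * j) : ℚ) / (2 * (j : ℚ) + 1))
          * y ^ (r - 2 * j) * PowerSeries.X ^ (2 * j)
      = 1

noncomputable def dcoef (m j : ℕ) : ℚ :=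
  if j ≤ m then (2*m+1) * (Nat.factorial (m+j)) / ((Nat.factorial (m-j)) * (Nat.factorial (2*j+1))) else 0

lemma dcoef_rec (m j : ℕ) (hj : j ≤ m + 1) :
    dcoef (m+2) (j+1) = dcoef (m+1) j + 2 * dcoef (m+1) (j+1) - dcoef m (j+1) := by
  rcases Nat.lt_or_ge j m with h | h
  · -- j + 1 ≤ m, write m = j + 1 + s
    obtain ⟨s, rfl⟩ := Nat.exists_eq_add_of_le (Nat.succ_le_of_lt h)
    simp only [dcoef]
    rw [if_pos (by omega), if_pos (by omega), if_pos (by omega), if_pos (by omega)]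
    rw [show (j+1+s+2) + (j+1) = (2*j+s+2)+1+1 by ring,
        show (j+1+s+2) - (j+1) = s+1+1 by omega,
        show (j+1+s+1) + j = 2*j+s+2 by ring,
        show (j+1+s+1) - j = s+1+1 by omega,
        show (j+1+s+1) + (j+1) = (2*j+s+2)+1 by ring,
        show (j+1+s+1) - (j+1) = s+1 by omega,
        show (j+1+s) + (j+1) = 2*j+s+2 by ring,
        show (j+1+s) - (j+1) = s by omega,
        show 2*(j+1)+1 = (2*j+1)+1+1 by ring]
    rw [Nat.factorial_succ ((2*j+s+2)+1), Nat.factorial_succ (2*j+s+2),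
        Nat.factorial_succ (s+1), Nat.factorial_succ s,
        Nat.factorial_succ ((2*j+1)+1), Nat.factorial_succ (2*j+1)]
    have hA : ((Nat.factorial (2*j+s+2) : ℚ)) ≠ 0 := Nat.cast_ne_zero.mpr (Nat.factorial_ne_zero _)
    have hB : ((Nat.factorial s : ℚ)) ≠ 0 := Nat.cast_ne_zero.mpr (Nat.factorial_ne_zero _)
    have hD : ((Nat.factorial (2*j+1) : ℚ)) ≠ 0 := Nat.cast_ne_zero.mpr (Nat.factorial_ne_zero _)
    push_cast
    field_simp
    ring
  · -- j = m or j = m + 1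
    rcases Nat.eq_or_lt_of_le h with rfl | h2
    · -- j = m
      simp only [dcoef]
      rw [if_pos (by omega), if_pos (by omega), if_pos (by omega), if_neg (by omega)]
      rw [show (m+2) + (m+1) = (2*m+2)+1 by ring, show (m+2) - (m+1) = 1 by omega,
          show (m+1) + m = 2*m+1 by ring, show (m+1) - m = 1 by omega,
          show (m+1) + (m+1) = 2*m+2 by ring, show (m+1) - (m+1) = 0 by omega,
          show 2*(m+1)+1 = (2*m+2)+1 by ring]
      rw [Nat.factorial_succ (2*m+2), Nat.factorial_succ (2*m+1)]
      have hA : ((Nat.factorial (2*m+1) : ℚ)) ≠ 0 := Nat.cast_ne_zero.mpr (Nat.factorial_ne_zero _)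
      have hA2 : ((Nat.factorial (2*m+2) : ℚ)) ≠ 0 := Nat.cast_ne_zero.mpr (Nat.factorial_ne_zero _)
      push_cast
      rw [Nat.factorial_one, Nat.factorial_zero]
      field_simp
      ring
    · -- j = m + 1
      have : j = m + 1 := by omega
      subst this
      simp only [dcoef]
      rw [if_pos (by omega), if_pos (by omega), if_neg (by omega), if_neg (by omega)]
      rw [show (m+2) + (m+1+1) = (2*m+3)+1 by ring, show (m+2) - (m+1+1) = 0 by omega,
          show (m+1) + (m+1) = 2*m+2 by ring, show (m+1) - (m+1) = 0 by omega,
          show 2*(m+1)+1 = 2*m+3 by ring, show 2*(m+1+1)+1 = (2*m+3)+1+1 by ring]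
      rw [Nat.factorial_succ ((2*m+3)+1), Nat.factorial_succ (2*m+3)]
      have hA : ((Nat.factorial (2*m+3) : ℚ)) ≠ 0 := Nat.cast_ne_zero.mpr (Nat.factorial_ne_zero _)
      have hA2 : ((Nat.factorial (2*m+2) : ℚ)) ≠ 0 := Nat.cast_ne_zero.mpr (Nat.factorial_ne_zero _)
      push_cast
      rw [Nat.factorial_zero]
      have h23 : (Nat.factorial (2*m+3) : ℚ) = (2*m+3) * Nat.factorial (2*m+2) := by
        rw [show 2*m+3 = (2*m+2)+1 by ring, Nat.factorial_succ]; push_cast; ring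
      rw [h23]
      field_simp
      ring

lemma dcoef_of_gt {m j : ℕ} (h : m < j) : dcoef m j = 0 := if_neg (by omega)

lemma dcoef_zero (m : ℕ) : dcoef m 0 = 2*m+1 := by
  have h : ((Nat.factorial m : ℚ)) ≠ 0 := Nat.cast_ne_zero.mpr (Nat.factorial_ne_zero _)
  simp only [dcoef, if_pos (Nat.zero_le m), Nat.add_zero, Nat.sub_zero]
  rw [show 2*0+1 = 1 by norm_num, Nat.factorial_one]
  field_simp
  simp

lemma lucas (K : Type*) [Field K] [CharZero K] (Z : K) (hZ : Z ≠ 0) (m : ℕ) :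
    ∑ j ∈ Finset.range (m+1), (dcoef m j : K) * (Z - Z⁻¹)^(2*j+1)
      = Z^(2*m+1) - (Z⁻¹)^(2*m+1) := by
  set u := Z - Z⁻¹ with hu
  have key : ∀ n : ℕ,
      (∑ j ∈ Finset.range (n+1), (dcoef n j : K) * u^(2*j+1) = Z^(2*n+1) - (Z⁻¹)^(2*n+1)) ∧
      (∑ j ∈ Finset.range (n+2), (dcoef (n+1) j : K) * u^(2*j+1) = Z^(2*(n+1)+1) - (Z⁻¹)^(2*(n+1)+1)) := by
    intro n
    induction n with
    | zero =>
      constructor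
      · simp [dcoef_zero, hu]
      · rw [Finset.sum_range_succ, Finset.sum_range_succ, Finset.sum_range_zero]
        have h0 : dcoef 1 0 = 3 := by rw [dcoef_zero]; norm_num
        have h1 : dcoef 1 1 = 1 := by
          simp only [dcoef, if_pos (le_refl 1)]
          norm_num [Nat.factorial]
        rw [h0, h1, hu]
        push_cast
        field_simp
        ring
    | succ n ih =>
      refine ⟨ih.2, ?_⟩
      have ih1 := ih.1
      have ih2 := ih.2
      have e1 : Z^(2*(n+1+1)+1) - (Z⁻¹)^(2*(n+1+1)+1)
          = (u^2+2) * (Z^(2*(n+1)+1) - (Z⁻¹)^(2*(n+1)+1)) - (Z^(2*n+1) - (Z⁻¹)^(2*n+1)) := by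
        rw [hu]
        linear_combination (-(Z*Z⁻¹+1)*(Z^(2*n+1) - Z⁻¹^(2*n+1)) + 2*(Z^(2*n+3) - Z⁻¹^(2*n+3))) * (mul_inv_cancel₀ hZ)
      rw [e1, ← ih1, ← ih2]
      -- LHS into canonical form
      have hL : ∑ j ∈ Finset.range (n+1+1+1), (dcoef (n+2) j : K) * u^(2*j+1)
          = (∑ j ∈ Finset.range (n+2),
              ((dcoef (n+1) j : K) + 2 * dcoef (n+1) (j+1) - dcoef n (j+1)) * u^(2*j+3))
            + (2*(n:K)+5) * u := by
        rw [Finset.sum_range_succ']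
        congr 1
        · apply Finset.sum_congr rfl
          intro j hj
          rw [Finset.mem_range] at hj
          rw [dcoef_rec n j (by omega), show 2*(j+1)+1 = 2*j+3 by ring]
          push_cast
          ring
        · rw [dcoef_zero]
          push_cast
          ring
      rw [hL]
      -- RHS into canonical form
      have h1 : (u^2+2) * ∑ j ∈ Finset.range (n+2), (dcoef (n+1) j : K) * u^(2*j+1)
          = (∑ j ∈ Finset.range (n+2), (dcoef (n+1) j : K) * u^(2*j+3))
            + ∑ j ∈ Finset.range (n+2), 2 * (dcoef (n+1) j : K) * u^(2*j+1) := by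
        rw [Finset.mul_sum, ← Finset.sum_add_distrib]
        apply Finset.sum_congr rfl
        intro j _
        rw [show 2*j+3 = (2*j+1)+2 by ring]
        ring
      have h2 : ∑ j ∈ Finset.range (n+2), 2 * (dcoef (n+1) j : K) * u^(2*j+1)
          = (∑ j ∈ Finset.range (n+2), 2 * (dcoef (n+1) (j+1) : K) * u^(2*j+3))
            + 2*(2*(n:K)+3) * u := by
        rw [Finset.sum_range_succ']
        congr 1
        · rw [Finset.sum_range_succ (fun j => 2 * ((dcoef (n+1) (j+1) : K)) * u ^ (2*j+3)) (n+1)]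
          rw [dcoef_of_gt (show n+1 < n+1+1 by omega)]
          simp only [Rat.cast_zero, mul_zero, zero_mul, add_zero]
          apply Finset.sum_congr rfl
          intro j _
          rw [show 2*(j+1)+1 = 2*j+3 by ring]
        · rw [dcoef_zero]
          push_cast
          ring
      have h3 : ∑ j ∈ Finset.range (n+1), (dcoef n j : K) * u^(2*j+1)
          = (∑ j ∈ Finset.range (n+2), (dcoef n (j+1) : K) * u^(2*j+3))
            + (2*(n:K)+1) * u := by
        rw [Finset.sum_range_succ']
        congr 1
        · rw [Finset.sum_range_succ (fun j => ((dcoef n (j+1) : K)) * u ^ (2*j+3)) (n+1),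
              Finset.sum_range_succ (fun j => ((dcoef n (j+1) : K)) * u ^ (2*j+3)) n]
          rw [dcoef_of_gt (show n < n+1 by omega), dcoef_of_gt (show n < n+1+1 by omega)]
          simp only [Rat.cast_zero, zero_mul, add_zero]
          apply Finset.sum_congr rfl
          intro j _
          rw [show 2*(j+1)+1 = 2*j+3 by ring]
        · rw [dcoef_zero]
          push_cast
          ring
      rw [h1, h2, h3]
      have key2 : (∑ j ∈ Finset.range (n+2),
            ((dcoef (n+1) j : K) + 2 * dcoef (n+1) (j+1) - dcoef n (j+1)) * u^(2*j+3))
          = (∑ j ∈ Finset.range (n+2), (dcoef (n+1) j : K) * u^(2*j+3))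
            + (∑ j ∈ Finset.range (n+2), 2 * (dcoef (n+1) (j+1) : K) * u^(2*j+3))
            - (∑ j ∈ Finset.range (n+2), (dcoef n (j+1) : K) * u^(2*j+3)) := by
        rw [← Finset.sum_add_distrib, ← Finset.sum_sub_distrib]
        apply Finset.sum_congr rfl
        intro j _
        ring
      rw [key2]
      ring
  exact (key m).1

lemma coefid (K : Type*) [Field K] [CharZero K] (m j : ℕ) (hj : j ≤ m) :
    (1/(2*(j:K)+1)) * (Nat.choose (j+m) (2*j) : K) = (dcoef m j : K) / (2*(m:K)+1) := by
  have h2j : (2*(j:ℚ)+1) ≠ 0 := by positivity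
  have hcastK : ∀ n : ℕ, n ≠ 0 → ((n : K)) ≠ 0 := fun n hn => Nat.cast_ne_zero.mpr hn
  have hq : dcoef m j * (2*(j:ℚ)+1) = (2*(m:ℚ)+1) * (Nat.choose (j+m) (2*j) : ℚ) := by
    simp only [dcoef, if_pos hj]
    rw [Nat.cast_choose ℚ (show 2*j ≤ j+m by omega), show j+m-2*j = m-j by omega,
        show m+j = j+m by omega, Nat.factorial_succ (2*j)]
    have hA : ((Nat.factorial (j+m) : ℚ)) ≠ 0 := Nat.cast_ne_zero.mpr (Nat.factorial_ne_zero _)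
    have hB : ((Nat.factorial (m-j) : ℚ)) ≠ 0 := Nat.cast_ne_zero.mpr (Nat.factorial_ne_zero _)
    have hD : ((Nat.factorial (2*j) : ℚ)) ≠ 0 := Nat.cast_ne_zero.mpr (Nat.factorial_ne_zero _)
    push_cast
    field_simp
  have hqK := congrArg (fun q : ℚ => (q : K)) hq
  push_cast at hqK
  have h2jK : (2*(j:K)+1) ≠ 0 := by
    have := hcastK (2*j+1) (by omega); push_cast at this; exact this
  have h2mK : (2*(m:K)+1) ≠ 0 := by
    have := hcastK (2*m+1) (by omega); push_cast at this; exact this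
  field_simp
  linear_combination -hqK

lemma part1 (m : ℕ) (K : Type*) [Field K] [CharZero K] (t y Z : K) (hZ : Z ≠ 0)
    (hu0 : Z - Z⁻¹ ≠ 0) (h1 : t / y = Z - Z⁻¹)
    (h2 : t^(2*m) * (Z^(2*m+1) - (Z⁻¹)^(2*m+1)) / (((2*m : ℕ) : K)+1) = (Z - Z⁻¹)^(2*m+1)) :
    ∑ j ∈ Finset.range (m+1),
        (1/(2*(j:K)+1)) * (Nat.choose (j+m) (2*j) : K) * y^(2*m-2*j) * t^(2*j) = 1 := by
  set u := Z - Z⁻¹ with hudef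
  have hy : y ≠ 0 := by
    intro h; rw [h, div_zero] at h1; exact hu0 h1.symm
  have ht : t = u * y := by
    rw [div_eq_iff hy] at h1; rw [h1]
  have hm1' : (2*(m:K)+1) ≠ 0 := by
    have : ((2*m+1 : ℕ) : K) ≠ 0 := Nat.cast_ne_zero.mpr (by omega)
    push_cast at this; exact this
  have hm1 : (((2*m : ℕ) : K)+1) ≠ 0 := by push_cast; exact hm1'
  have h2' : y^(2*m) * (Z^(2*m+1) - (Z⁻¹)^(2*m+1)) = (2*(m:K)+1) * u := by
    rw [div_eq_iff hm1] at h2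
    have hu2 : u^(2*m) ≠ 0 := pow_ne_zero _ hu0
    apply mul_left_cancel₀ hu2
    push_cast at h2 ⊢
    calc u^(2*m) * (y^(2*m) * (Z^(2*m+1) - (Z⁻¹)^(2*m+1)))
        = t^(2*m) * (Z^(2*m+1) - (Z⁻¹)^(2*m+1)) := by rw [ht, mul_pow]; ring
      _ = u^(2*m) * ((2*(m:K)+1) * u) := by rw [h2]; ring
  have hL := lucas K Z hZ m
  have S1' : (∑ j ∈ Finset.range (m+1), (dcoef m j : K) * (y^(2*m) * u^(2*j))) * u
      = (2*(m:K)+1) * u := by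
    calc (∑ j ∈ Finset.range (m+1), (dcoef m j : K) * (y^(2*m) * u^(2*j))) * u
        = y^(2*m) * ∑ j ∈ Finset.range (m+1), (dcoef m j : K) * u^(2*j+1) := by
          rw [Finset.sum_mul, Finset.mul_sum]
          apply Finset.sum_congr rfl
          intro j _
          rw [pow_succ]
          ring
      _ = (2*(m:K)+1) * u := by rw [hL]; exact h2'
  have S2 := mul_right_cancel₀ hu0 S1'
  have per : ∀ j ∈ Finset.range (m+1),
      (1/(2*(j:K)+1)) * (Nat.choose (j+m) (2*j) : K) * y^(2*m-2*j) * t^(2*j)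
      = (dcoef m j : K) * (y^(2*m) * u^(2*j)) / (2*(m:K)+1) := by
    intro j hj
    rw [Finset.mem_range] at hj
    have hjm : j ≤ m := by omega
    have hyt : y^(2*m-2*j) * t^(2*j) = y^(2*m) * u^(2*j) := by
      rw [ht, mul_pow, show y^(2*m-2*j) * (u^(2*j) * y^(2*j)) = (y^(2*m-2*j) * y^(2*j)) * u^(2*j) by ring,
          ← pow_add, show 2*m-2*j+2*j = 2*m by omega]
    rw [mul_assoc, hyt, coefid K m j hjm]
    ring
  rw [Finset.sum_congr rfl per, ← Finset.sum_div, S2, div_self hm1']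

open PowerSeries

noncomputable def Cq (m j : ℕ) : ℚ := (Nat.choose (j+m) (2*j) : ℚ) / (2*(j:ℚ)+1)

noncomputable def Fop (m : ℕ) (y : PowerSeries ℚ) : PowerSeries ℚ :=
  ∑ j ∈ Finset.range (m+1), PowerSeries.C (R := ℚ) (Cq m j) * y^(2*m - 2*j) * PowerSeries.X^(2*j)

lemma coeff_pow_congr {n : ℕ} {z z' : PowerSeries ℚ}
    (h : ∀ i ≤ n, coeff (R := ℚ) i z = coeff (R := ℚ) i z') (k : ℕ) :
    ∀ i ≤ n, coeff (R := ℚ) i (z^k) = coeff (R := ℚ) i (z'^k) := by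
  induction k with
  | zero => intro i _; rfl
  | succ k ih =>
    intro i hi
    rw [pow_succ, pow_succ, coeff_mul, coeff_mul]
    apply Finset.sum_congr rfl
    intro p hp
    rw [Finset.HasAntidiagonal.mem_antidiagonal] at hp
    rw [ih p.1 (by omega), h p.2 (by omega)]

lemma coeff_Fop_congr {n : ℕ} {z z' : PowerSeries ℚ} (m : ℕ)
    (h : ∀ i ≤ n, coeff (R := ℚ) i z = coeff (R := ℚ) i z') :
    coeff (R := ℚ) n (Fop m z) = coeff (R := ℚ) n (Fop m z') := by
  unfold Fop
  rw [map_sum, map_sum]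
  apply Finset.sum_congr rfl
  intro j _
  rw [coeff_mul_X_pow', coeff_mul_X_pow']
  by_cases hj : 2*j ≤ n
  · rw [if_pos hj, if_pos hj, coeff_C_mul, coeff_C_mul,
        coeff_pow_congr h (2*m-2*j) (n-2*j) (by omega)]
  · rw [if_neg hj, if_neg hj]

lemma coeff_zero_pow' (z : PowerSeries ℚ) (h0 : coeff (R := ℚ) 0 z = 1) (k : ℕ) :
    coeff (R := ℚ) 0 (z^k) = 1 := by
  rw [coeff_zero_eq_constantCoeff] at h0 ⊢
  rw [map_pow, h0, one_pow]

lemma coeff_pow_perturb (z : PowerSeries ℚ) (h0 : coeff (R := ℚ) 0 z = 1) (c : ℚ) (N : ℕ)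
    (hN : 1 ≤ N) (k : ℕ) :
    coeff (R := ℚ) N ((z + PowerSeries.C (R := ℚ) c * X^N)^k) = coeff (R := ℚ) N (z^k) + k * c := by
  set W := z + PowerSeries.C (R := ℚ) c * X^N with hW
  have hWlow : ∀ i, i < N → coeff (R := ℚ) i W = coeff (R := ℚ) i z := by
    intro i hi
    rw [hW, map_add, coeff_C_mul, coeff_X_pow, if_neg (by omega), mul_zero, add_zero]
  have hWN : coeff (R := ℚ) N W = coeff (R := ℚ) N z + c := by
    rw [hW, map_add, coeff_C_mul, coeff_X_pow, if_pos rfl, mul_one]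
  have hW0 : coeff (R := ℚ) 0 W = 1 := by rw [hWlow 0 (by omega), h0]
  induction k with
  | zero => push_cast; ring
  | succ k ih =>
    rw [pow_succ, pow_succ, coeff_mul, coeff_mul,
        Finset.Nat.sum_antidiagonal_eq_sum_range_succ_mk,
        Finset.Nat.sum_antidiagonal_eq_sum_range_succ_mk]
    have key : ∀ i ∈ Finset.range (N+1),
        coeff (R := ℚ) i (W^k) * coeff (R := ℚ) (N-i) W
        = coeff (R := ℚ) i (z^k) * coeff (R := ℚ) (N-i) z
          + (if i = 0 then c else 0) + (if i = N then k * c else 0) := by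
      intro i hi
      rw [Finset.mem_range] at hi
      rcases Nat.eq_zero_or_pos i with rfl | hipos
      · rw [if_pos rfl, if_neg (by omega), coeff_zero_pow' z h0, coeff_zero_pow' W hW0,
            Nat.sub_zero, hWN]
        ring
      · rcases Nat.lt_or_ge i N with hiN | hiN
        · rw [if_neg (by omega), if_neg (by omega),
              coeff_pow_congr (n := N-1) (fun i hi => hWlow i (by omega)) k i (by omega),
              hWlow (N-i) (by omega)]
          ring
        · have : i = N := by omega
          subst this
          rw [if_neg (by omega), if_pos rfl, Nat.sub_self, hW0, h0, ih]
          ring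
    rw [Finset.sum_congr rfl key, Finset.sum_add_distrib, Finset.sum_add_distrib,
        Finset.sum_ite_eq' (Finset.range (N+1)) 0 (fun _ => c),
        Finset.sum_ite_eq' (Finset.range (N+1)) N (fun _ => (k : ℚ) * c),
        if_pos (Finset.mem_range.mpr (by omega)), if_pos (Finset.mem_range.mpr (by omega))]
    push_cast
    ring

lemma Cq_zero (m : ℕ) : Cq m 0 = 1 := by
  simp [Cq]

lemma coeff_Fop_perturb (m : ℕ) (z : PowerSeries ℚ) (h0 : coeff (R := ℚ) 0 z = 1) (c : ℚ)
    (N : ℕ) (hN : 1 ≤ N) :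
    coeff (R := ℚ) N (Fop m (z + PowerSeries.C (R := ℚ) c * X^N))
      = coeff (R := ℚ) N (Fop m z) + (2*(m:ℚ))*c := by
  unfold Fop
  rw [map_sum, map_sum]
  have key : ∀ j ∈ Finset.range (m+1),
      coeff (R := ℚ) N (PowerSeries.C (R := ℚ) (Cq m j) * (z + PowerSeries.C (R := ℚ) c * X^N)^(2*m-2*j) * X^(2*j))
      = coeff (R := ℚ) N (PowerSeries.C (R := ℚ) (Cq m j) * z^(2*m-2*j) * X^(2*j))
        + (if j = 0 then (2*(m:ℚ))*c else 0) := by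
    intro j _
    rw [coeff_mul_X_pow', coeff_mul_X_pow']
    rcases Nat.eq_zero_or_pos j with rfl | hj
    · rw [if_pos rfl, if_pos (by omega), if_pos (by omega), Nat.mul_zero, Nat.sub_zero,
          Nat.sub_zero, coeff_C_mul, coeff_C_mul,
          coeff_pow_perturb z h0 c N hN (2*m), Cq_zero]
      push_cast
      ring
    · by_cases h2j : 2*j ≤ N
      · rw [if_pos h2j, if_pos h2j, if_neg (show ¬ j = 0 by omega), coeff_C_mul, coeff_C_mul, add_zero]
        congr 1
        apply coeff_pow_congr (n := N-1) (fun i hi => by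
          rw [map_add, coeff_C_mul, coeff_X_pow, if_neg (by omega), mul_zero, add_zero])
        omega
      · rw [if_neg h2j, if_neg h2j, if_neg (show ¬ j = 0 by omega), add_zero]
  rw [Finset.sum_congr rfl key, Finset.sum_add_distrib,
      Finset.sum_ite_eq' (Finset.range (m+1)) 0 (fun _ => 2*(m:ℚ)*c),
      if_pos (Finset.mem_range.mpr (by omega))]

noncomputable def yApp (m : ℕ) : ℕ → PowerSeries ℚ
  | 0 => 1
  | (N+1) => yApp m N
      + PowerSeries.C (R := ℚ) ((coeff (R := ℚ) (N+1) (1 - Fop m (yApp m N))) / (2*(m:ℚ))) * X^(N+1)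

lemma coeff_yApp_step (m N i : ℕ) (h : i ≤ N) :
    coeff (R := ℚ) i (yApp m (N+1)) = coeff (R := ℚ) i (yApp m N) := by
  rw [yApp, map_add, coeff_C_mul, coeff_X_pow, if_neg (by omega), mul_zero, add_zero]

lemma coeff_yApp_stable (m : ℕ) {i M N : ℕ} (h1 : i ≤ M) (h2 : M ≤ N) :
    coeff (R := ℚ) i (yApp m N) = coeff (R := ℚ) i (yApp m M) := by
  induction N, h2 using Nat.le_induction with
  | base => rfl
  | succ N hMN ih => rw [coeff_yApp_step m N i (by omega), ih]

noncomputable def ySol (m : ℕ) : PowerSeries ℚ := PowerSeries.mk fun n => coeff (R := ℚ) n (yApp m n)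

lemma coeff_ySol (m : ℕ) {i N : ℕ} (h : i ≤ N) :
    coeff (R := ℚ) i (ySol m) = coeff (R := ℚ) i (yApp m N) := by
  rw [ySol, coeff_mk, coeff_yApp_stable m (le_refl i) h]

lemma yApp_zero_coeff (m N : ℕ) : coeff (R := ℚ) 0 (yApp m N) = 1 := by
  induction N with
  | zero => rw [yApp]; simp
  | succ N ih => rw [coeff_yApp_step m N 0 (by omega), ih]

lemma ySol_zero_coeff (m : ℕ) : coeff (R := ℚ) 0 (ySol m) = 1 := by
  rw [coeff_ySol m (le_refl 0), yApp_zero_coeff]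

lemma Fop_yApp (m : ℕ) (hm : 1 ≤ m) (N : ℕ) :
    coeff (R := ℚ) N (Fop m (yApp m N)) = coeff (R := ℚ) N (1 : PowerSeries ℚ) := by
  induction N with
  | zero =>
    rw [yApp, Fop, map_sum, Finset.sum_eq_single 0]
    · rw [Nat.mul_zero, Nat.sub_zero, one_pow, pow_zero, mul_one, mul_one, Cq_zero]
      simp
    · intro j _ hj
      rw [coeff_mul_X_pow', if_neg (by omega)]
    · intro h
      exact absurd (Finset.mem_range.mpr (by omega)) h
  | succ N ih =>
    rw [yApp, coeff_Fop_perturb m (yApp m N) (yApp_zero_coeff m N) _ (N+1) (by omega),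
        map_sub]
    have hm0 : (2*(m:ℚ)) ≠ 0 := by
      have : (m:ℚ) ≠ 0 := Nat.cast_ne_zero.mpr (by omega)
      intro h; apply this; linarith [h]
    field_simp
    ring

lemma Fop_ySol (m : ℕ) (hm : 1 ≤ m) : Fop m (ySol m) = 1 := by
  ext n
  rw [coeff_Fop_congr m (fun i hi => coeff_ySol m (le_trans hi (le_refl n))), Fop_yApp m hm n]

lemma even_mul_coeff {z w : PowerSeries ℚ} (hz : ∀ i, Odd i → coeff (R := ℚ) i z = 0)
    (hw : ∀ i, Odd i → coeff (R := ℚ) i w = 0) : ∀ i, Odd i → coeff (R := ℚ) i (z*w) = 0 := by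
  intro i hi
  rw [coeff_mul]
  apply Finset.sum_eq_zero
  intro p hp
  rw [Finset.HasAntidiagonal.mem_antidiagonal] at hp
  obtain ⟨c, hc⟩ := hi
  rcases Nat.even_or_odd p.1 with h | h
  · obtain ⟨a, ha⟩ := h
    rw [hw p.2 ⟨c - a, by omega⟩, mul_zero]
  · rw [hz p.1 h, zero_mul]

lemma even_pow_coeff {z : PowerSeries ℚ} (hz : ∀ i, Odd i → coeff (R := ℚ) i z = 0) (k : ℕ) :
    ∀ i, Odd i → coeff (R := ℚ) i (z^k) = 0 := by
  induction k with
  | zero =>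
    intro i hi
    rw [pow_zero, coeff_one, if_neg (by rintro rfl; exact (Nat.not_odd_iff_even.mpr Even.zero) hi)]
  | succ k ih =>
    rw [pow_succ]
    exact even_mul_coeff ih hz

lemma even_Fop_coeff {z : PowerSeries ℚ} (m : ℕ) (hz : ∀ i, Odd i → coeff (R := ℚ) i z = 0) :
    ∀ i, Odd i → coeff (R := ℚ) i (Fop m z) = 0 := by
  intro i hi
  rw [Fop, map_sum]
  apply Finset.sum_eq_zero
  intro j _
  have h1 : ∀ i', Odd i' → coeff (R := ℚ) i' (PowerSeries.C (R := ℚ) (Cq m j) * z^(2*m-2*j)) = 0 := by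
    have hc : ∀ i', Odd i' → coeff (R := ℚ) i' (PowerSeries.C (R := ℚ) (Cq m j)) = 0 := by
      intro i' hi'
      rw [coeff_C, if_neg (by rintro rfl; exact (Nat.not_odd_iff_even.mpr Even.zero) hi')]
    exact even_mul_coeff hc (even_pow_coeff hz _)
  have h2 : ∀ i', Odd i' → coeff (R := ℚ) i' ((X : PowerSeries ℚ)^(2*j)) = 0 := by
    intro i' hi'
    rw [coeff_X_pow, if_neg (by rintro rfl; exact (Nat.not_odd_iff_even.mpr ⟨j, by omega⟩) hi')]
  exact even_mul_coeff h1 h2 i hi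

lemma yApp_even (m N : ℕ) : ∀ i, Odd i → coeff (R := ℚ) i (yApp m N) = 0 := by
  induction N with
  | zero =>
    intro i hi
    rw [yApp, coeff_one, if_neg (by rintro rfl; exact (Nat.not_odd_iff_even.mpr Even.zero) hi)]
  | succ N ih =>
    intro i hi
    rw [yApp, map_add, coeff_C_mul, coeff_X_pow]
    by_cases h : i = N+1
    · subst h
      rw [map_sub, coeff_one,
          if_neg (by rintro h'; exact (Nat.not_odd_iff_even.mpr Even.zero) (h' ▸ hi)),
          even_Fop_coeff m ih _ hi]
      simp [ih _ hi]
    · rw [if_neg h, mul_zero, add_zero, ih i hi]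

lemma ySol_even (m : ℕ) : ∀ i, Odd i → coeff (R := ℚ) i (ySol m) = 0 := by
  intro i hi
  rw [coeff_ySol m (le_refl i)]
  exact yApp_even m i i hi

lemma Fop_unique (m : ℕ) (hm : 1 ≤ m) (y₁ y₂ : PowerSeries ℚ)
    (h₁0 : coeff (R := ℚ) 0 y₁ = 1) (h₂0 : coeff (R := ℚ) 0 y₂ = 1)
    (e₁ : Fop m y₁ = 1) (e₂ : Fop m y₂ = 1) : y₁ = y₂ := by
  set G : PowerSeries ℚ := ∑ j ∈ Finset.range (m+1),
      PowerSeries.C (R := ℚ) (Cq m j)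
        * (∑ i ∈ Finset.range (2*m-2*j), y₁^i * y₂^(2*m-2*j-1-i)) * X^(2*j) with hG
  have key : G * (y₁ - y₂) = Fop m y₁ - Fop m y₂ := by
    rw [hG, Fop, Fop, ← Finset.sum_sub_distrib, Finset.sum_mul]
    apply Finset.sum_congr rfl
    intro j _
    calc PowerSeries.C (R := ℚ) (Cq m j) * (∑ i ∈ Finset.range (2*m-2*j), y₁^i * y₂^(2*m-2*j-1-i))
          * X^(2*j) * (y₁ - y₂)
        = PowerSeries.C (R := ℚ) (Cq m j)
            * ((∑ i ∈ Finset.range (2*m-2*j), y₁^i * y₂^(2*m-2*j-1-i)) * (y₁ - y₂))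
            * X^(2*j) := by ring
      _ = _ := by rw [geom_sum₂_mul]; ring
  have hzero : G * (y₁ - y₂) = 0 := by rw [key, e₁, e₂, sub_self]
  have hGne : G ≠ 0 := by
    intro h
    have hc : constantCoeff (R := ℚ) G = 2*(m:ℚ) := by
      rw [hG, map_sum, Finset.sum_range_succ']
      have hz : ∀ j ∈ Finset.range m, (constantCoeff (R := ℚ))
          (PowerSeries.C (R := ℚ) (Cq m (j+1))
            * (∑ i ∈ Finset.range (2*m-2*(j+1)), y₁^i * y₂^(2*m-2*(j+1)-1-i)) * X^(2*(j+1))) = 0 := by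
        intro j _
        rw [map_mul, map_pow, constantCoeff_X, zero_pow (by omega), mul_zero]
      rw [Finset.sum_congr rfl hz, Finset.sum_const, smul_zero, zero_add]
      rw [map_mul, map_mul, map_pow, constantCoeff_X, pow_zero, mul_one, constantCoeff_C,
          Cq_zero, one_mul, map_sum]
      have hone : ∀ i ∈ Finset.range (2*m-2*0), (constantCoeff (R := ℚ)) (y₁^i * y₂^(2*m-2*0-1-i)) = 1 := by
        intro i _
        rw [map_mul, map_pow, map_pow, ← coeff_zero_eq_constantCoeff,
            h₁0, h₂0, one_pow, one_pow, mul_one]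
      rw [Finset.sum_congr rfl hone, Finset.sum_const, Finset.card_range, nsmul_eq_mul, mul_one]
      push_cast [Nat.mul_zero, Nat.sub_zero]
      ring
    rw [h, map_zero] at hc
    have : (m:ℚ) ≠ 0 := Nat.cast_ne_zero.mpr (by omega)
    apply this; linarith
  rcases mul_eq_zero.mp hzero with h | h
  · exact absurd h hGne
  · exact sub_eq_zero.mp h

lemma coeff_pow_small (y : PowerSeries ℚ) (h0 : coeff (R := ℚ) 0 y = 1) (h1 : coeff (R := ℚ) 1 y = 0)
    (h3 : coeff (R := ℚ) 3 y = 0) (k : ℕ) :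
    coeff (R := ℚ) 0 (y^k) = 1 ∧ coeff (R := ℚ) 1 (y^k) = 0 ∧ coeff (R := ℚ) 2 (y^k) = k * coeff (R := ℚ) 2 y ∧
    coeff (R := ℚ) 3 (y^k) = 0 ∧
    coeff (R := ℚ) 4 (y^k) = k * coeff (R := ℚ) 4 y + ((k:ℚ) * ((k:ℚ)-1) / 2) * (coeff (R := ℚ) 2 y)^2 := by
  induction k with
  | zero =>
    refine ⟨?_, ?_, ?_, ?_, ?_⟩ <;> simp [coeff_one]
  | succ k ih =>
    obtain ⟨i0, i1, i2, i3, i4⟩ := ih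
    have expand : ∀ n : ℕ, coeff (R := ℚ) n (y^(k+1))
        = ∑ i ∈ Finset.range (n+1), coeff (R := ℚ) i (y^k) * coeff (R := ℚ) (n-i) y := by
      intro n
      rw [pow_succ, coeff_mul, Finset.Nat.sum_antidiagonal_eq_sum_range_succ_mk]
    refine ⟨?_, ?_, ?_, ?_, ?_⟩
    · rw [expand 0]
      simp only [Finset.sum_range_succ, Finset.sum_range_zero]
      norm_num [i0, h0]
    · rw [expand 1]
      simp only [Finset.sum_range_succ, Finset.sum_range_zero]
      norm_num [i0, i1, h0, h1]
    · rw [expand 2]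
      simp only [Finset.sum_range_succ, Finset.sum_range_zero]
      norm_num [i0, i1, i2, h0, h1]
      push_cast
      ring
    · rw [expand 3]
      simp only [Finset.sum_range_succ, Finset.sum_range_zero]
      norm_num [i0, i1, i2, i3, h0, h1, h3]
    · rw [expand 4]
      simp only [Finset.sum_range_succ, Finset.sum_range_zero]
      norm_num [i0, i1, i2, i3, i4, h0, h1, h3]
      push_cast
      ring

lemma choose_two_cast (m : ℕ) : (Nat.choose (1+m) 2 : ℚ) = ((m:ℚ)+1)*(m:ℚ)/2 := by
  have hdvd : 2 ∣ (1+m)*m := by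
    have h := (Nat.even_mul_succ_self m).two_dvd
    rwa [show m*(m+1) = (1+m)*m by ring] at h
  have h : (Nat.choose (1+m) 2) * 2 = (1+m)*m := by
    rw [Nat.choose_two_right, show 1+m-1 = m by omega, Nat.div_mul_cancel hdvd]
  have hq : ((Nat.choose (1+m) 2 : ℚ)) * 2 = ((1+m)*m : ℕ) := by exact_mod_cast congrArg (Nat.cast (R := ℚ)) h
  push_cast at hq
  linarith

lemma solD_coeff2 (m : ℕ) (hm : 1 ≤ m) (y : PowerSeries ℚ)
    (h0 : coeff (R := ℚ) 0 y = 1) (hodd : ∀ n, Odd n → coeff (R := ℚ) n y = 0)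
    (hF : Fop m y = 1) : coeff (R := ℚ) 2 y = -((m:ℚ)+1)/12 := by
  have h1 : coeff (R := ℚ) 1 y = 0 := hodd 1 ⟨0, by norm_num⟩
  have h3 : coeff (R := ℚ) 3 y = 0 := hodd 3 ⟨1, by norm_num⟩
  have pow := coeff_pow_small y h0 h1 h3
  have e := congrArg (coeff (R := ℚ) 2) hF
  rw [Fop, map_sum] at e
  rw [← Finset.sum_subset (Finset.range_subset_range.mpr (show 2 ≤ m+1 by omega))
      (fun j _ hj => by
        rw [Finset.mem_range, not_lt] at hj
        rw [coeff_mul_X_pow', if_neg (by omega)])] at e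
  simp only [Finset.sum_range_succ, Finset.sum_range_zero, zero_add] at e
  rw [coeff_mul_X_pow', coeff_mul_X_pow', if_pos (by omega), if_pos (by omega),
      coeff_C_mul, coeff_C_mul] at e
  rw [show (2:ℕ) - 2*0 = 2 by omega, show (2:ℕ) - 2*1 = 0 by omega,
      show 2*m - 2*0 = 2*m by omega] at e
  rw [(pow (2*m)).2.2.1, (pow (2*m-2*1)).1, Cq_zero, coeff_one] at e
  norm_num at e
  -- e : 2*m*(coeff 2 y) + Cq m 1 = 0  (shape may vary)
  have hCq1 : Cq m 1 = ((m:ℚ)+1)*(m:ℚ)/6 := by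
    rw [Cq, show 2*1 = 2 by norm_num, choose_two_cast]
    push_cast
    ring
  rw [hCq1] at e
  have hm0 : (m:ℚ) ≠ 0 := Nat.cast_ne_zero.mpr (by omega)
  field_simp at e
  have e2 : (m:ℚ) * (12 * coeff (R := ℚ) 2 y + ((m:ℚ)+1)) = 0 := by linear_combination e
  rcases mul_eq_zero.mp e2 with h | h
  · exact absurd h hm0
  · field_simp
    linarith

lemma choose_four_cast (s : ℕ) : (Nat.choose (s+4) 4 : ℚ)
    = ((s:ℚ)+4)*((s:ℚ)+3)*((s:ℚ)+2)*((s:ℚ)+1)/24 := by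
  rw [Nat.cast_choose ℚ (show 4 ≤ s+4 by omega), show s+4-4 = s by omega]
  rw [show s+4 = (s+3)+1 by omega, Nat.factorial_succ (s+3),
      show s+3 = (s+2)+1 by omega, Nat.factorial_succ (s+2),
      show s+2 = (s+1)+1 by omega, Nat.factorial_succ (s+1), Nat.factorial_succ s]
  have hs : ((Nat.factorial s : ℚ)) ≠ 0 := Nat.cast_ne_zero.mpr (Nat.factorial_ne_zero _)
  push_cast
  rw [show (Nat.factorial 4 : ℚ) = 24 by norm_num [Nat.factorial]]
  field_simp
  ring

lemma solD_coeff4 (m : ℕ) (hm : 1 ≤ m) (y : PowerSeries ℚ)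
    (h0 : coeff (R := ℚ) 0 y = 1) (hodd : ∀ n, Odd n → coeff (R := ℚ) n y = 0)
    (hF : Fop m y = 1) :
    coeff (R := ℚ) 4 y = ((m:ℚ)+1)*((m:ℚ)-3)*(4*(m:ℚ)+1)/1440 := by
  have ha2 := solD_coeff2 m hm y h0 hodd hF
  have h1 : coeff (R := ℚ) 1 y = 0 := hodd 1 ⟨0, by norm_num⟩
  have h3 : coeff (R := ℚ) 3 y = 0 := hodd 3 ⟨1, by norm_num⟩
  have pow := coeff_pow_small y h0 h1 h3
  have e := congrArg (coeff (R := ℚ) 4) hF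
  rw [Fop, map_sum] at e
  rcases Nat.lt_or_ge m 2 with hm2 | hm2
  · -- m = 1
    have : m = 1 := by omega
    subst this
    simp only [Finset.sum_range_succ, Finset.sum_range_zero, zero_add] at e
    rw [coeff_mul_X_pow', coeff_mul_X_pow', if_pos (by omega), if_pos (by omega),
        coeff_C_mul, coeff_C_mul,
        show (4:ℕ) - 2*0 = 4 by omega, show (4:ℕ) - 2*1 = 2 by omega,
        show 2*1 - 2*1 = 0 by omega] at e
    rw [(pow 2).2.2.2.2, (pow 0).2.2.1, Cq_zero, coeff_one] at e
    norm_num at e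
    norm_num [ha2] at e ⊢
    linarith
  · -- m ≥ 2
    obtain ⟨s, rfl⟩ := Nat.exists_eq_add_of_le hm2
    rw [← Finset.sum_subset (Finset.range_subset_range.mpr (show 3 ≤ 2+s+1 by omega))
        (fun j _ hj => by
          rw [Finset.mem_range, not_lt] at hj
          rw [coeff_mul_X_pow', if_neg (by omega)])] at e
    simp only [Finset.sum_range_succ, Finset.sum_range_zero, zero_add] at e
    rw [coeff_mul_X_pow', coeff_mul_X_pow', coeff_mul_X_pow',
        if_pos (by omega), if_pos (by omega), if_pos (by omega),
        coeff_C_mul, coeff_C_mul, coeff_C_mul,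
        show (4:ℕ) - 2*0 = 4 by omega, show (4:ℕ) - 2*1 = 2 by omega,
        show (4:ℕ) - 2*2 = 0 by omega,
        show 2*(2+s) - 2*0 = 2*s+4 by omega, show 2*(2+s) - 2*1 = 2*s+2 by omega,
        show 2*(2+s) - 2*2 = 2*s by omega] at e
    rw [(pow (2*s+4)).2.2.2.2, (pow (2*s+2)).2.2.1, (pow (2*s)).1, Cq_zero, coeff_one] at e
    have hCq1 : Cq (2+s) 1 = ((s:ℚ)+3)*((s:ℚ)+2)/6 := by
      rw [Cq, show 2*1 = 2 by norm_num, show 1+(2+s) = 1+(s+2) by omega, choose_two_cast]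
      push_cast
      ring
    have hCq2 : Cq (2+s) 2 = ((s:ℚ)+4)*((s:ℚ)+3)*((s:ℚ)+2)*((s:ℚ)+1)/120 := by
      rw [Cq, show 2*2 = 4 by norm_num, show 2+(2+s) = s+4 by omega, choose_four_cast]
      push_cast
      ring
    rw [hCq1, hCq2] at e
    have ha2' : coeff (R := ℚ) 2 y = -((s:ℚ)+3)/12 := by rw [ha2]; push_cast; ring
    rw [ha2'] at e
    push_cast at e ⊢
    have hsne : (2*(s:ℚ)+4) ≠ 0 := by positivity
    field_simp at e
    apply mul_left_cancel₀ hsne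
    linear_combination (1/207360 : ℚ) * e


/-- Let `r` be an even positive integer.  If `t, y` are related by `t/y = Z - Z⁻¹` and
`t^r·(Z^{r+1} - Z^{-r-1})/(r+1) = (Z - Z⁻¹)^{r+1}` for an auxiliary (nondegenerate)
variable `Z`, then `y` satisfies
`Σ_{j=0}^{r/2} (1/(2j+1))·binom(j+r/2,2j)·y^{r-2j}·t^{2j} = 1`; moreover this equation
has a unique power series solution `y(t) ∈ 1 + t²ℚ[[t²]]`, beginning
`y(t) = 1 - ((r+2)/24)t² + ((r+2)(r-6)(2r+1)/5760)t⁴ + O(t⁶)`. -/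
theorem stmt12 (r : ℕ) (hr : 0 < r) (he : Even r) :
    (∀ (K : Type) [Field K] [CharZero K], ∀ t y Z : K,
      Z ≠ 0 → Z - Z⁻¹ ≠ 0 →
      t / y = Z - Z⁻¹ →
      t ^ r * (Z ^ (r + 1) - (Z⁻¹) ^ (r + 1)) / ((r : K) + 1) = (Z - Z⁻¹) ^ (r + 1) →
      ∑ j ∈ Finset.range (r / 2 + 1),
          (1 / (2 * (j : K) + 1)) * (Nat.choose (j + r / 2) (2 * j) : K)
            * y ^ (r - 2 * j) * t ^ (2 * j)
        = 1) ∧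
    (∃! y : PowerSeries ℚ, isSolD r y) ∧
    ∀ y : PowerSeries ℚ, isSolD r y →
      PowerSeries.coeff (R := ℚ) 2 y = -((r : ℚ) + 2) / 24 ∧
      PowerSeries.coeff (R := ℚ) 4 y
        = ((r : ℚ) + 2) * ((r : ℚ) - 6) * (2 * (r : ℚ) + 1) / 5760 := by
  obtain ⟨m, hm⟩ := he
  have hr2m : r = 2*m := by omega
  have hm1 : 1 ≤ m := by omega
  have hdiv : r/2 = m := by omega
  have hiso : ∀ y : PowerSeries ℚ, isSolD r y ↔
      (PowerSeries.coeff (R := ℚ) 0 y = 1 ∧ (∀ n, Odd n → PowerSeries.coeff (R := ℚ) n y = 0) ∧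
        Fop m y = 1) := by
    intro y
    unfold isSolD
    simp only [Fop, Cq]
    rw [hdiv, hr2m]
  refine ⟨?_, ?_, ?_⟩
  · intro K _ _ t y Z hZ hu h1 h2
    rw [hdiv, hr2m]
    rw [hr2m] at h2
    exact part1 m K t y Z hZ hu h1 h2
  · refine ⟨ySol m, (hiso _).mpr ⟨ySol_zero_coeff m, ySol_even m, Fop_ySol m hm1⟩, ?_⟩
    intro y hy
    obtain ⟨hy0, hyodd, hyF⟩ := (hiso y).mp hy
    exact Fop_unique m hm1 y (ySol m) hy0 (ySol_zero_coeff m) hyF (Fop_ySol m hm1)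
  · intro y hy
    obtain ⟨hy0, hyodd, hyF⟩ := (hiso y).mp hy
    constructor
    · rw [solD_coeff2 m hm1 y hy0 hyodd hyF, hr2m]
      push_cast
      ring
    · rw [solD_coeff4 m hm1 y hy0 hyodd hyF, hr2m]
      push_cast
      ring
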